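/- For C = 5 (so k = 2, r = 2, ρ(5) = 8/3), any valid solution satisfies A(5,N) ≥ (23/120)N(N−1) + (N−1)/40. -/

import Mathlib

/-- The load induced on the arc of the directed cycle `C⃗_p` going from `t` to `t+1`
by a set `S` of requests, each request `(i,j)` being routed clockwise from `i` to `j`. -/
def cload (p : ℕ) (S : Finset (ZMod p × ZMod p)) (t : ZMod p) : ℕ :=
  (S.filter fun a => (t - a.1).val < (a.2 - a.1).val).card

/-- The set of vertices (endpoints of arcs) of a digraph given by its arc set. -/
def verts (p : ℕ) (S : Finset (ZMod p × ZMod p)) : Finset (ZMod p) :=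
  S.image Prod.fst ∪ S.image Prod.snd

lemma pair_cases {α : Type*} [DecidableEq α] {a b c d : α} (h : ({a,b}:Finset α) = {c,d}) :
    (a = c ∧ b = d) ∨ (a = d ∧ b = c) := by
  have ha : a ∈ ({c,d}:Finset α) := h ▸ (by simp)
  have hb : b ∈ ({c,d}:Finset α) := h ▸ (by simp)
  have hc : c ∈ ({a,b}:Finset α) := h.symm ▸ (by simp)
  have hd : d ∈ ({a,b}:Finset α) := h.symm ▸ (by simp)
  simp only [Finset.mem_insert, Finset.mem_singleton] at ha hb hc hd
  tauto

lemma card_val_lt (N d : ℕ) [NeZero N] (hd : d ≤ N) :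
    (Finset.univ.filter (fun u : ZMod N => u.val < d)).card = d := by
  conv_rhs => rw [← Finset.card_range d]
  refine Finset.card_nbij' (fun u => u.val) (fun k => (k : ZMod N)) ?_ ?_ ?_ ?_
  · intro u hu; simp only [Finset.coe_filter, Finset.mem_filter] at hu; simpa using hu.2
  · intro k hk
    simp only [Finset.coe_range, Set.mem_Iio, Finset.mem_range] at hk
    simp only [Finset.coe_filter, Finset.mem_filter, Finset.mem_univ, true_and, Set.mem_setOf_eq]
    rwa [ZMod.val_cast_of_lt (lt_of_lt_of_le hk hd)]
  · intro u _; exact ZMod.natCast_rightInverse u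
  · intro k hk
    simp only [Finset.coe_range, Set.mem_Iio, Finset.mem_range] at hk
    exact ZMod.val_cast_of_lt (lt_of_lt_of_le hk hd)

lemma sum_cload (N : ℕ) [NeZero N] (S : Finset (ZMod N × ZMod N)) :
    ∑ t : ZMod N, cload N S t = ∑ a ∈ S, (a.2 - a.1).val := by
  simp only [cload, Finset.card_filter]
  rw [Finset.sum_comm]
  apply Finset.sum_congr rfl
  intro a _
  have h1 : ∑ t : ZMod N, (if (t - a.1).val < (a.2 - a.1).val then 1 else 0)
      = (Finset.univ.filter (fun t : ZMod N => (t - a.1).val < (a.2 - a.1).val)).card := by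
    rw [Finset.card_filter]
  rw [h1]
  have hb : (Finset.univ.filter (fun t : ZMod N => (t - a.1).val < (a.2 - a.1).val)).card
      = (Finset.univ.filter (fun u : ZMod N => u.val < (a.2 - a.1).val)).card := by
    refine Finset.card_nbij' (fun t => t - a.1) (fun u => u + a.1) ?_ ?_ ?_ ?_
    · intro t ht; simp only [Finset.coe_filter, Set.mem_setOf_eq, Finset.mem_filter] at ht ⊢; exact ⟨Finset.mem_univ _, ht.2⟩
    · intro u hu; simp only [Finset.coe_filter, Set.mem_setOf_eq, Finset.mem_filter] at hu ⊢
      refine ⟨Finset.mem_univ _, ?_⟩; simpa using hu.2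
    · intro t _; ring
    · intro u _; ring
  rw [hb, card_val_lt]
  exact le_of_lt (ZMod.val_lt _)

lemma g_rec (n : ℕ) : ∑ k ∈ Finset.range (n+2), min k (n+2-k)
    = (∑ k ∈ Finset.range n, min k (n-k)) + n + 1 := by
  rw [Finset.sum_range_succ' (fun k => min k (n+2-k))]
  have h1 : ∀ i ∈ Finset.range (n+1), min (i+1) (n+2-(i+1)) = min i (n-i) + 1 := by
    intro i hi; simp only [Finset.mem_range] at hi; omega
  rw [Finset.sum_congr rfl h1, Finset.sum_add_distrib, Finset.sum_const, Finset.card_range,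
    Finset.sum_range_succ]
  simp; omega

lemma g_bound : ∀ n : ℕ, n * n ≤ 4 * (∑ k ∈ Finset.range n, min k (n-k)) + 1 := by
  intro n
  induction n using Nat.strong_induction_on with
  | _ n ih =>
    match n with
    | 0 => simp
    | 1 => simp
    | (m+2) =>
      have := ih m (by omega)
      rw [g_rec]
      have hexp : (m+2)*(m+2) = m*m + 4*m + 4 := by ring
      omega

lemma mem_verts_fst {N : ℕ} {S : Finset (ZMod N × ZMod N)} {a : ZMod N × ZMod N}
    (h : a ∈ S) : a.1 ∈ verts N S := by
  simp only [verts, Finset.mem_union, Finset.mem_image]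
  exact Or.inl ⟨a, h, rfl⟩

lemma mem_verts_snd {N : ℕ} {S : Finset (ZMod N × ZMod N)} {a : ZMod N × ZMod N}
    (h : a ∈ S) : a.2 ∈ verts N S := by
  simp only [verts, Finset.mem_union, Finset.mem_image]
  exact Or.inr ⟨a, h, rfl⟩

lemma part_bound (N : ℕ) [NeZero N] (T Bw : Finset (ZMod N × ZMod N))
    (hT1 : ∀ a ∈ T, a.1 ≠ a.2 ∧ 2 * (a.2 - a.1).val ≤ N)
    (hswap : ∀ a ∈ T, Prod.swap a ∉ T)
    (hBT : Bw ⊆ T)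
    (hload : ∀ t : ZMod N, cload N Bw t ≤ 5)
    (hne : Bw.Nonempty) :
    Bw.card + 3 ≤ 3 * (verts N Bw).card := by
  classical
  set V := verts N Bw with hV
  set p := V.card with hp
  -- every request has distinct endpoints
  have hne12 : ∀ a ∈ Bw, a.1 ≠ a.2 := fun a ha => (hT1 a (hBT ha)).1
  -- p ≥ 2
  obtain ⟨a0, ha0⟩ := hne
  have hp2 : 2 ≤ p := by
    rw [hp]
    exact Finset.one_lt_card.2 ⟨a0.1, mem_verts_fst ha0, a0.2, mem_verts_snd ha0, hne12 a0 ha0⟩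
  -- the crossing count
  set c : (ZMod N × ZMod N) → ℕ :=
    fun a => (V.filter (fun v => (v - a.1).val < (a.2 - a.1).val)).card with hc
  -- c a ≥ 1
  have hc1 : ∀ a ∈ Bw, 1 ≤ c a := by
    intro a ha
    have h0 : a.1 ∈ V.filter (fun v => (v - a.1).val < (a.2 - a.1).val) := by
      simp only [Finset.mem_filter]
      refine ⟨mem_verts_fst ha, ?_⟩
      rw [sub_self, ZMod.val_zero]
      have : a.2 - a.1 ≠ 0 := sub_ne_zero.2 (hne12 a ha).symm
      exact Nat.pos_of_ne_zero (fun h => this (ZMod.val_eq_zero _ |>.1 h))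
    calc 1 ≤ (V.filter (fun v => (v - a.1).val < (a.2 - a.1).val)).card :=
            Finset.card_pos.2 ⟨_, h0⟩
    _ = c a := rfl
  -- Σ c ≤ 5p
  have hsum : ∑ a ∈ Bw, c a ≤ 5 * p := by
    have hswp : ∑ a ∈ Bw, c a = ∑ v ∈ V, cload N Bw v := by
      simp only [hc, cload, Finset.card_filter]
      rw [Finset.sum_comm]
    rw [hswp]
    calc ∑ v ∈ V, cload N Bw v ≤ ∑ v ∈ V, 5 := Finset.sum_le_sum (fun v _ => hload v)
    _ = 5 * p := by rw [Finset.sum_const, hp]; ring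
  -- injectivity for fixed c value
  have hinj : ∀ a ∈ Bw, ∀ b ∈ Bw, a.1 = b.1 → c a = c b → a = b := by
    rintro ⟨u, x⟩ hx ⟨u', y⟩ hy h1 hcab
    simp only at h1
    subst h1
    simp only [hc] at hcab
    have key : ∀ z w : ZMod N, (u, z) ∈ Bw → (u, w) ∈ Bw →
        (z - u).val < (w - u).val →
        ((V.filter (fun v => (v - u).val < (z - u).val)).card
          ≠ (V.filter (fun v => (v - u).val < (w - u).val)).card) := by
      intro z w hz hw hlt
      have hsub : insert z (V.filter (fun v => (v - u).val < (z - u).val))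
          ⊆ V.filter (fun v => (v - u).val < (w - u).val) := by
        intro v hv
        rcases Finset.mem_insert.1 hv with rfl | hv'
        · exact Finset.mem_filter.2 ⟨mem_verts_snd hz, hlt⟩
        · simp only [Finset.mem_filter] at hv' ⊢
          exact ⟨hv'.1, by omega⟩
      have hni : z ∉ V.filter (fun v => (v - u).val < (z - u).val) := by
        simp only [Finset.mem_filter]; push_neg; intro _; omega
      have := Finset.card_le_card hsub
      rw [Finset.card_insert_of_notMem hni] at this
      omega
    rcases lt_trichotomy ((x - u).val) ((y - u).val) with hlt | heq | hgt
    · exact absurd hcab (key x y hx hy hlt)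
    · have h2 : x - u = y - u := ZMod.val_injective N heq
      have : x = y := by
        have := congrArg (· + u) h2
        simpa using this
      rw [this]
    · exact absurd hcab.symm (key y x hy hx hgt)
  -- count of requests with c = k is at most p
  have hck : ∀ k : ℕ, (Bw.filter (fun a => c a = k)).card ≤ p := by
    intro k
    rw [hp]
    apply Finset.card_le_card_of_injOn (fun a => a.1)
    · intro a ha
      exact mem_verts_fst (Finset.mem_filter.1 ha).1
    · intro a ha b hb h1
      simp only [Finset.mem_coe, Finset.mem_filter] at ha hb
      exact hinj a ha.1 b hb.1 h1 (ha.2.trans hb.2.symm)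
  -- 3|B| ≤ Σ c + 2 a1 + a2
  have hlb : 3 * Bw.card ≤ (∑ a ∈ Bw, c a)
      + 2 * (Bw.filter (fun a => c a = 1)).card + (Bw.filter (fun a => c a = 2)).card := by
    have : ∀ a ∈ Bw, 3 ≤ c a + (if c a = 1 then 2 else 0) + (if c a = 2 then 1 else 0) := by
      intro a ha
      have := hc1 a ha
      split_ifs <;> omega
    calc 3 * Bw.card = ∑ _a ∈ Bw, 3 := by rw [Finset.sum_const]; ring
    _ ≤ ∑ a ∈ Bw, (c a + (if c a = 1 then 2 else 0) + (if c a = 2 then 1 else 0)) :=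
        Finset.sum_le_sum this
    _ = (∑ a ∈ Bw, c a) + (∑ a ∈ Bw, if c a = 1 then 2 else 0)
        + (∑ a ∈ Bw, if c a = 2 then 1 else 0) := by
        rw [Finset.sum_add_distrib, Finset.sum_add_distrib]
    _ = (∑ a ∈ Bw, c a) + 2 * (Bw.filter (fun a => c a = 1)).card
        + (Bw.filter (fun a => c a = 2)).card := by
        have e1 : (∑ a ∈ Bw, if c a = 1 then (2:ℕ) else 0)
            = 2 * (Bw.filter (fun a => c a = 1)).card := by
          rw [← Finset.sum_filter, Finset.sum_const]; ring
        have e2 : (∑ a ∈ Bw, if c a = 2 then (1:ℕ) else 0)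
            = (Bw.filter (fun a => c a = 2)).card := by
          rw [← Finset.sum_filter, Finset.sum_const]; ring
        rw [e1, e2]
  have hload8 : 3 * Bw.card ≤ 8 * p := by
    have := hck 1; have := hck 2; omega
  -- tournament bound : Bw.card ≤ p.choose 2
  have hchoose : Bw.card ≤ p.choose 2 := by
    have : Bw.card ≤ (V.powersetCard 2).card := by
      apply Finset.card_le_card_of_injOn (fun a => ({a.1, a.2} : Finset (ZMod N)))
      · intro a ha
        simp only [Finset.mem_coe, Finset.mem_powersetCard]
        constructor
        · intro v hv
          rcases Finset.mem_insert.1 hv with rfl | hv'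
          · exact mem_verts_fst ha
          · rw [Finset.mem_singleton.1 hv']; exact mem_verts_snd ha
        · rw [Finset.card_insert_of_notMem (by simp [hne12 a ha]), Finset.card_singleton]
      · intro a ha b hb hpair
        simp only [Finset.mem_coe] at ha hb
        rcases pair_cases hpair with ⟨h1, h2⟩ | ⟨h1, h2⟩
        · exact Prod.ext h1 h2
        · exfalso
          have hb' : b = Prod.swap a := Prod.ext h2.symm h1.symm
          exact hswap a (hBT ha) (hb' ▸ hBT hb)
    rw [Finset.card_powersetCard] at this
    exact this
  -- combine
  have hch2 : p.choose 2 = p * (p-1) / 2 := Nat.choose_two_right p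
  have hfin : ∀ q bc : ℕ, 2 ≤ q → 3*bc ≤ 8*q → bc ≤ q*(q-1)/2 → bc + 3 ≤ 3*q := by
    intro q bc hq h2 h3
    rcases le_or_gt q 8 with h8 | h8
    · interval_cases q <;> omega
    · omega
  exact hfin p Bw.card hp2 hload8 (hch2 ▸ hchoose)

theorem stmt_19 (N W : ℕ) (hN : 2 ≤ N)
    -- `T` is the tournament of requests: all shortest clockwise arcs, with exactly one
    -- arc chosen per diametrical pair when `N` is even.
    (T : Finset (ZMod N × ZMod N))
    (hT1 : ∀ a ∈ T, a.1 ≠ a.2 ∧ 2 * (a.2 - a.1).val ≤ N)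
    (hT2 : ∀ i j : ZMod N, i ≠ j → 2 * (j - i).val < N → (i, j) ∈ T)
    (hT3 : ∀ i j : ZMod N, 2 * (j - i).val = N → ((i, j) ∈ T ↔ (j, i) ∉ T))
    -- a valid partition of the requests into `W` nonempty parts, each of load at most 5
    (B : Fin W → Finset (ZMod N × ZMod N))
    (hne : ∀ w, (B w).Nonempty)
    (hdisj : ∀ w w', w ≠ w' → Disjoint (B w) (B w'))
    (hcover : ∀ a : ZMod N × ZMod N, a ∈ T ↔ ∃ w, a ∈ B w)
    (hload : ∀ w, ∀ t : ZMod N, cload N (B w) t ≤ 5) :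
    ((∑ w : Fin W, (verts N (B w)).card : ℕ) : ℚ)
      ≥ (23 : ℚ) / 120 * (N : ℚ) * ((N : ℚ) - 1) + ((N : ℚ) - 1) / 40 := by
  classical
  haveI : NeZero N := ⟨by omega⟩
  -- basic val arithmetic
  have hval : ∀ a : ZMod N × ZMod N, a.1 ≠ a.2 →
      (a.2 - a.1).val + (a.1 - a.2).val = N := by
    intro a h
    have h0 : a.2 - a.1 ≠ 0 := sub_ne_zero.2 (Ne.symm h)
    have h1 : a.1 - a.2 = -(a.2 - a.1) := by ring
    rw [h1, ZMod.neg_val, if_neg h0]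
    have := ZMod.val_lt (a.2 - a.1)
    omega
  -- no request together with its reverse
  have hswap : ∀ a ∈ T, Prod.swap a ∉ T := by
    intro a ha hsw
    obtain ⟨hne1, hle1⟩ := hT1 a ha
    obtain ⟨_, hle2⟩ := hT1 _ hsw
    simp only [Prod.fst_swap, Prod.snd_swap] at hle2
    have h3 := hval a hne1
    have heq : 2 * (a.2 - a.1).val = N := by omega
    exact (hT3 a.1 a.2 heq).1 ha hsw
  -- each part is inside T
  have hBT : ∀ w, B w ⊆ T := fun w a ha => (hcover a).2 ⟨w, ha⟩
  -- T is the disjoint union of the parts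
  have hTeq : T = Finset.univ.biUnion B := by
    ext a
    simp only [Finset.mem_biUnion, Finset.mem_univ, true_and]
    exact hcover a
  have hdisj' : ∀ w ∈ (Finset.univ : Finset (Fin W)), ∀ w' ∈ Finset.univ,
      w ≠ w' → Disjoint (B w) (B w') := fun w _ w' _ h => hdisj w w' h
  have hTcard : T.card = ∑ w : Fin W, (B w).card := by
    rw [hTeq, Finset.card_biUnion hdisj']
  -- per part bound, summed
  set A := ∑ w : Fin W, (verts N (B w)).card with hA
  have h1 : T.card + 3 * W ≤ 3 * A := by
    have : ∀ w : Fin W, (B w).card + 3 ≤ 3 * (verts N (B w)).card :=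
      fun w => part_bound N T (B w) hT1 hswap (hBT w) (hload w) (hne w)
    calc T.card + 3 * W = ∑ w : Fin W, ((B w).card + 3) := by
          rw [Finset.sum_add_distrib, Finset.sum_const, ← hTcard]
          simp [mul_comm]
    _ ≤ ∑ w : Fin W, 3 * (verts N (B w)).card := Finset.sum_le_sum (fun w _ => this w)
    _ = 3 * A := by rw [hA, Finset.mul_sum]
  -- counting T: the off-diagonal
  set OD := Finset.univ.filter (fun a : ZMod N × ZMod N => a.1 ≠ a.2) with hOD
  have hODcard : OD.card + N = N * N := by
    have hdiag : (Finset.univ.filter (fun a : ZMod N × ZMod N => ¬ a.1 ≠ a.2)).card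
        = (Finset.univ : Finset (ZMod N)).card := by
      refine Finset.card_nbij' (fun a => a.1) (fun i => (i, i)) ?_ ?_ ?_ ?_
      · intro a _; exact Finset.mem_univ _
      · intro i _; simp
      · intro a ha; simp only [Finset.coe_filter, Set.mem_setOf_eq, Finset.mem_filter, not_not] at ha
        exact Prod.ext rfl ha.2
      · intro i _; rfl
    rw [Finset.card_univ, ZMod.card] at hdiag
    have hh := Finset.card_filter_add_card_filter_not
      (s := (Finset.univ : Finset (ZMod N × ZMod N)))
      (fun a : ZMod N × ZMod N => a.1 ≠ a.2)
    rw [Finset.card_univ, Fintype.card_prod, ZMod.card] at hh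
    rw [← hOD] at hh
    generalize N * N = M at hh ⊢
    omega
  have hODeq : OD = T ∪ T.image Prod.swap := by
    ext a
    simp only [hOD, Finset.mem_filter, Finset.mem_univ, true_and, Finset.mem_union,
      Finset.mem_image]
    constructor
    · intro hne12
      rcases lt_trichotomy (2 * (a.2 - a.1).val) N with hlt | heq | hgt
      · exact Or.inl (hT2 a.1 a.2 hne12 hlt)
      · by_cases hmem : a ∈ T
        · exact Or.inl hmem
        · refine Or.inr ⟨Prod.swap a, ?_, Prod.swap_swap a⟩
          have h3 := hT3 a.1 a.2 heq
          by_contra hc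
          exact hmem (h3.2 hc)
      · have h3 := hval a hne12
        have : 2 * (a.1 - a.2).val < N := by omega
        refine Or.inr ⟨(a.2, a.1), hT2 a.2 a.1 (Ne.symm hne12) this, ?_⟩
        simp [Prod.ext_iff]
    · intro h
      rcases h with h | ⟨b, hb, rfl⟩
      · exact (hT1 a h).1
      · simp only [Prod.fst_swap, Prod.snd_swap]
        exact Ne.symm (hT1 b hb).1
  have hdisjU : Disjoint T (T.image Prod.swap) := by
    rw [Finset.disjoint_left]
    intro a ha hb
    obtain ⟨b, hbT, hba⟩ := Finset.mem_image.1 hb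
    subst hba
    exact hswap b hbT ha
  -- 2 * T.card + N = N * N
  have hTc2 : 2 * T.card + N = N * N := by
    have hu : OD.card = T.card + (T.image Prod.swap).card := by
      rw [hODeq, Finset.card_union_of_disjoint hdisjU]
    have him : (T.image Prod.swap).card = T.card :=
      Finset.card_image_of_injective T Prod.swap_injective
    generalize N * N = M at hODcard ⊢
    omega
  -- total weighted distance
  set D := ∑ a ∈ T, (a.2 - a.1).val with hD
  have hDle : D ≤ 5 * N * W := by
    have hsplit : D = ∑ w : Fin W, ∑ a ∈ B w, (a.2 - a.1).val := by
      rw [hD, hTeq, Finset.sum_biUnion (fun w _ w' _ h => hdisj w w' h)]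
    rw [hsplit]
    calc ∑ w : Fin W, ∑ a ∈ B w, (a.2 - a.1).val
        ≤ ∑ _w : Fin W, 5 * N := by
          apply Finset.sum_le_sum
          intro w _
          rw [← sum_cload N (B w)]
          calc ∑ t : ZMod N, cload N (B w) t ≤ ∑ _t : ZMod N, 5 :=
                Finset.sum_le_sum (fun t _ => hload w t)
          _ = 5 * N := by rw [Finset.sum_const, Finset.card_univ, ZMod.card]; ring
    _ = 5 * N * W := by rw [Finset.sum_const, Finset.card_univ, Fintype.card_fin]; ring
  -- the min-distance function
  set m : ZMod N × ZMod N → ℕ := fun a => min (a.2 - a.1).val (a.1 - a.2).val with hm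
  have hmT : ∀ a ∈ T, m a = (a.2 - a.1).val := by
    intro a ha
    obtain ⟨h1a, h2a⟩ := hT1 a ha
    have := hval a h1a
    simp only [hm]
    omega
  have hsum2 : ∑ a ∈ OD, m a = 2 * D := by
    rw [hODeq, Finset.sum_union hdisjU,
      Finset.sum_image (fun x _ y _ h => Prod.swap_injective h)]
    have e1 : ∑ a ∈ T, m a = D := Finset.sum_congr rfl hmT
    have e2 : ∑ a ∈ T, m (Prod.swap a) = D := by
      refine Finset.sum_congr rfl (fun a ha => ?_)
      have : m (Prod.swap a) = m a := by
        simp only [hm, Prod.fst_swap, Prod.snd_swap]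
        exact min_comm _ _
      rw [this, hmT a ha]
    rw [e1, e2]
    ring
  have hsum3 : ∑ a ∈ OD, m a = ∑ a : ZMod N × ZMod N, m a := by
    refine Finset.sum_subset (Finset.subset_univ OD) ?_
    intro a _ ha
    simp only [hOD, Finset.mem_filter, Finset.mem_univ, true_and, not_not] at ha
    simp [hm, ha]
  set G := ∑ k ∈ Finset.range N, min k (N - k) with hG
  have hsum4 : ∑ a : ZMod N × ZMod N, m a = N * G := by
    rw [Fintype.sum_prod_type]
    have hin : ∀ i : ZMod N, ∑ j : ZMod N, m (i, j) = G := by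
      intro i
      have e1 : ∑ j : ZMod N, m (i, j) = ∑ z : ZMod N, min z.val (N - z.val) := by
        refine Finset.sum_nbij' (fun j => j - i) (fun z => z + i) ?_ ?_ ?_ ?_ ?_
        · intro a _; exact Finset.mem_univ _
        · intro a _; exact Finset.mem_univ _
        · intro a _; ring
        · intro a _; ring
        · intro j _
          simp only [hm]
          by_cases hji : j = i
          · subst hji; simp
          · have hne0 : j - i ≠ 0 := sub_ne_zero.2 hji
            have hneg : i - j = -(j - i) := by ring
            rw [hneg, ZMod.neg_val, if_neg hne0]
      rw [e1, hG]
      refine Finset.sum_nbij' (fun z => z.val) (fun k => (k : ZMod N)) ?_ ?_ ?_ ?_ ?_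
      · intro z _; exact Finset.mem_range.2 (ZMod.val_lt z)
      · intro k _; exact Finset.mem_univ _
      · intro z _; exact ZMod.natCast_rightInverse z
      · intro k hk; exact ZMod.val_cast_of_lt (Finset.mem_range.1 hk)
      · intro z _; rfl
    rw [Finset.sum_congr rfl (fun i _ => hin i), Finset.sum_const, Finset.card_univ, ZMod.card,
      smul_eq_mul]
  have hGb := g_bound N
  rw [← hG] at hGb
  have hNG : N * G = 2 * D := by rw [← hsum4, ← hsum3, hsum2]
  have hGW : G ≤ 10 * W := by
    have hh : N * G ≤ N * (10 * W) := by
      rw [hNG]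
      calc 2 * D ≤ 2 * (5 * N * W) := by omega
      _ = N * (10 * W) := by ring
    exact Nat.le_of_mul_le_mul_left hh (by omega)
  have h3 : N * N ≤ 40 * W + 1 := le_trans hGb (by omega)
  -- final arithmetic
  obtain ⟨sq, hsq⟩ : ∃ sq, N * N = sq := ⟨_, rfl⟩
  rw [hsq] at hTc2 h3
  have hfin : 23 * sq ≤ 120 * A + 20 * N + 3 := by omega
  rw [← hsq] at hfin
  have hq : (23:ℚ) * ((N:ℚ) * (N:ℚ)) ≤ 120 * (A:ℚ) + 20 * (N:ℚ) + 3 := by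
    exact_mod_cast hfin
  rw [ge_iff_le]
  linarith [hq]
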